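/- If x = x_1⋯x_l and y = y_1⋯y_l are words such that u_x(λ) = u_y(λ) for all partitions λ, and x' = (x_1+1)⋯(x_l+1), y' = (y_1+1)⋯(y_l+1) are obtained by incrementing every letter, then u_{x'}(λ) = u_{y'}(λ) for all partitions λ. -/

import Mathlib

/-- A partition, represented by its column lengths (the conjugate):
`c i` is the number of boxes in column `i`. -/
def IsPartition (c : ℕ+ → ℕ) : Prop :=
  (∀ i : ℕ+, c (i + 1) ≤ c i) ∧ ∃ N : ℕ+, ∀ i : ℕ+, N ≤ i → c i = 0

open Classical in
/-- The Schur operator `u_i`: add a box to column `i` if the result is a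
partition, else `none` (representing `0`). -/
noncomputable def addBox (i : ℕ+) (c : ℕ+ → ℕ) : Option (ℕ+ → ℕ) :=
  if IsPartition (Function.update c i (c i + 1)) then
    some (Function.update c i (c i + 1))
  else none

/-- `u_x = u_{x_1} ∘ ⋯ ∘ u_{x_l}` for a word `x = x_1 ⋯ x_l`. -/
noncomputable def schurWord (x : List ℕ+) (c : ℕ+ → ℕ) : Option (ℕ+ → ℕ) :=
  x.foldr (fun i o => o.bind (addBox i)) (some c)

/-- `α_i(x)`: the maximum over suffixes `s` of `x` of `w_{i+1}(s) - w_i(s)`. -/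
def alpha (i : ℕ+) (x : List ℕ+) : ℕ :=
  (x.tails.map (fun s => s.count (i + 1) - s.count i)).foldr max 0

/- Auxiliary PNat lemmas -/
lemma pnat_succ_sub_one (i : ℕ+) : i + 1 - 1 = i := by
  apply PNat.coe_injective; rw [PNat.sub_coe]; simp [PNat.lt_add_left]

lemma pnat_succ_ne_one (i : ℕ+) : (i + 1 : ℕ+) ≠ 1 := by
  intro h; have := congrArg (PNat.val) h; simp at this

lemma pnat_cases (j : ℕ+) : j = 1 ∨ ∃ i : ℕ+, j = i + 1 := by
  by_cases h : j = 1
  · exact Or.inl h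
  · exact Or.inr (PNat.exists_eq_succ_of_ne_one h)

lemma pnat_succ_ne_self (b : ℕ+) : b + 1 ≠ b := by
  intro h; have := congrArg (PNat.val) h; simp at this

lemma pnat_succ_inj {i j : ℕ+} (h : i + 1 = j + 1) : i = j := add_right_cancel h

/-- `up m e` prepends a column of length `m` in front of `e`. -/
noncomputable def up (m : ℕ) (e : ℕ+ → ℕ) : ℕ+ → ℕ :=
  fun j => if j = 1 then m else e (j - 1)

@[simp] lemma up_one (m : ℕ) (e : ℕ+ → ℕ) : up m e 1 = m := by simp [up]

@[simp] lemma up_succ (m : ℕ) (e : ℕ+ → ℕ) (i : ℕ+) : up m e (i + 1) = e i := by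
  simp [up, pnat_succ_ne_one, pnat_succ_sub_one]

lemma isPartition_up {e : ℕ+ → ℕ} (he : IsPartition e) {m : ℕ} (hm : e 1 ≤ m) :
    IsPartition (up m e) := by
  obtain ⟨hmono, N, hN⟩ := he
  constructor
  · intro i
    rcases pnat_cases i with rfl | ⟨i, rfl⟩
    · simpa using hm
    · rw [up_succ, up_succ]
      exact hmono i
  · refine ⟨N + 1, fun i hi => ?_⟩
    rcases pnat_cases i with rfl | ⟨i, rfl⟩
    · exact absurd hi (not_le_of_gt (PNat.lt_add_left 1 N))
    · rw [up_succ]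
      exact hN i (le_of_add_le_add_right hi)

lemma isPartition_update_one {e : ℕ+ → ℕ} (he : IsPartition e) :
    IsPartition (Function.update e 1 (e 1 + 1)) := by
  obtain ⟨hmono, N, hN⟩ := he
  constructor
  · intro i
    rcases eq_or_ne (i + 1) 1 with h1 | h1
    · exact absurd h1 (pnat_succ_ne_one i)
    rcases eq_or_ne i 1 with rfl | h2
    · rw [Function.update_of_ne h1, Function.update_self]
      exact le_trans (hmono 1) (Nat.le_succ _)
    · rw [Function.update_of_ne h1, Function.update_of_ne h2]
      exact hmono i
  · refine ⟨N + 1, fun i hi => ?_⟩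
    have hi1 : i ≠ 1 := ne_of_gt (lt_of_lt_of_le (PNat.lt_add_left 1 N) hi)
    rw [Function.update_of_ne hi1]
    exact hN i (le_trans (le_of_lt (PNat.lt_add_right N 1)) hi)

lemma isPartition_update_succ {e : ℕ+ → ℕ} (he : IsPartition e) {b : ℕ+}
    (hb : e (b + 1) + 1 ≤ e b) :
    IsPartition (Function.update e (b + 1) (e (b + 1) + 1)) := by
  obtain ⟨hmono, N, hN⟩ := he
  constructor
  · intro i
    rcases eq_or_ne (i + 1) (b + 1) with h1 | h1
    · have hib : i = b := pnat_succ_inj h1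
      rw [hib, Function.update_self, Function.update_of_ne (pnat_succ_ne_self b).symm]
      exact hb
    rcases eq_or_ne i (b + 1) with rfl | h2
    · rw [Function.update_of_ne h1, Function.update_self]
      exact le_trans (hmono (b + 1)) (Nat.le_succ _)
    · rw [Function.update_of_ne h1, Function.update_of_ne h2]
      exact hmono i
  · refine ⟨N + (b + 1), fun i hi => ?_⟩
    have hib : i ≠ b + 1 := ne_of_gt (lt_of_lt_of_le (PNat.lt_add_left (b + 1) N) hi)
    rw [Function.update_of_ne hib]
    exact hN i (le_trans (le_of_lt (PNat.lt_add_right N (b + 1))) hi)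

lemma isPartition_update_succ' {e : ℕ+ → ℕ} {b : ℕ+}
    (h : IsPartition (Function.update e (b + 1) (e (b + 1) + 1))) :
    e (b + 1) + 1 ≤ e b := by
  have := h.1 b
  rwa [Function.update_self, Function.update_of_ne (pnat_succ_ne_self b).symm] at this

lemma addBox_one {e : ℕ+ → ℕ} (he : IsPartition e) :
    addBox 1 e = some (Function.update e 1 (e 1 + 1)) := by
  rw [addBox, if_pos (isPartition_update_one he)]

lemma addBox_succ {e : ℕ+ → ℕ} (he : IsPartition e) (b : ℕ+) :
    addBox (b + 1) e = if e (b + 1) + 1 ≤ e b then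
      some (Function.update e (b + 1) (e (b + 1) + 1)) else none := by
  rw [addBox]
  by_cases h : e (b + 1) + 1 ≤ e b
  · rw [if_pos (isPartition_update_succ he h), if_pos h]
  · rw [if_neg (fun hp => h (isPartition_update_succ' hp)), if_neg h]

lemma addBox_some {a : ℕ+} {e e' : ℕ+ → ℕ} (h : addBox a e = some e') :
    e' = Function.update e a (e a + 1) ∧ IsPartition e' := by
  rw [addBox] at h
  split at h
  · cases h; exact ⟨rfl, by assumption⟩
  · cases h

lemma schurWord_cons (a : ℕ+) (t : List ℕ+) (c : ℕ+ → ℕ) :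
    schurWord (a :: t) c = (schurWord t c).bind (addBox a) := rfl

lemma schurWord_partition {x : List ℕ+} {d e : ℕ+ → ℕ} (hd : IsPartition d)
    (h : schurWord x d = some e) : IsPartition e := by
  induction x with
  | nil => cases h; exact hd
  | cons a t ih =>
    rw [schurWord_cons] at h
    rcases ho : schurWord t d with _ | e'
    · rw [ho] at h; cases h
    · rw [ho] at h
      simp only [Option.bind_some] at h
      exact (addBox_some h).2

lemma main_lemma (x : List ℕ+) (m : ℕ) (d : ℕ+ → ℕ) (hd : IsPartition d)
    (hdm : d 1 ≤ m) :
    schurWord (x.map (· + 1)) (up m d) =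
      (schurWord x d).bind (fun e => if e 1 ≤ m then some (up m e) else none) := by
  induction x with
  | nil =>
    simp [schurWord, hdm]
  | cons a t ih =>
    rw [List.map_cons, schurWord_cons, schurWord_cons, ih]
    rcases ho : schurWord t d with _ | e
    · simp [ho]
    have he : IsPartition e := schurWord_partition hd ho
    simp only [Option.bind_some]
    by_cases hem : e 1 ≤ m
    · rw [if_pos hem]
      simp only [Option.bind_some]
      have hue : IsPartition (up m e) := isPartition_up he hem
      rcases pnat_cases a with rfl | ⟨b, rfl⟩
      · -- a = 1
        rw [addBox_one he, addBox_succ hue 1]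
        simp only [up_succ, up_one, Option.bind_some]
        by_cases hc : e 1 + 1 ≤ m
        · rw [if_pos hc, if_pos (by simpa using hc)]
          congr 1
          funext j
          rcases pnat_cases j with rfl | ⟨i, rfl⟩
          · rw [Function.update_of_ne (pnat_succ_ne_one 1).symm, up_one, up_one]
          · rcases eq_or_ne i 1 with rfl | hi
            · rw [Function.update_self, up_succ, Function.update_self]
            · have h1 : (i + 1 : ℕ+) ≠ 1 + 1 := fun hcon => hi (pnat_succ_inj hcon)
              rw [Function.update_of_ne h1, up_succ, up_succ,
                Function.update_of_ne hi]
        · rw [if_neg hc, if_neg (by simpa using hc)]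
      · -- a = b + 1
        rw [addBox_succ he b]
        rw [show ((b : ℕ+) + 1 + 1 : ℕ+) = (b + 1) + 1 from rfl, addBox_succ hue (b + 1)]
        simp only [up_succ]
        by_cases hc : e (b + 1) + 1 ≤ e b
        · rw [if_pos hc, if_pos hc]
          simp only [Option.bind_some]
          rw [if_pos (by rw [Function.update_of_ne (pnat_succ_ne_one b).symm]; exact hem)]
          congr 1
          funext j
          rcases pnat_cases j with rfl | ⟨i, rfl⟩
          · rw [Function.update_of_ne (pnat_succ_ne_one (b + 1)).symm, up_one, up_one]
          · rcases eq_or_ne i (b + 1) with rfl | hi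
            · rw [Function.update_self, up_succ, Function.update_self]
            · have h1 : (i + 1 : ℕ+) ≠ (b + 1) + 1 := fun hcon => hi (pnat_succ_inj hcon)
              rw [Function.update_of_ne h1, up_succ, up_succ,
                Function.update_of_ne hi]
        · rw [if_neg hc, if_neg hc]; simp
    · rw [if_neg hem]
      simp only [Option.bind_none]
      rcases hab : addBox a e with _ | e'
      · simp
      · simp only [Option.bind_some]
        rw [if_neg]
        intro hcon
        apply hem
        have he' := (addBox_some hab).1
        rcases eq_or_ne (1 : ℕ+) a with rfl | hne
        · rw [he', Function.update_self] at hcon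
          omega
        · rw [he', Function.update_of_ne hne] at hcon
          exact hcon

lemma up_down (c : ℕ+ → ℕ) : up (c 1) (fun i => c (i + 1)) = c := by
  funext j
  rcases pnat_cases j with rfl | ⟨i, rfl⟩
  · rw [up_one]
  · rw [up_succ]

theorem stmt4 (x y : List ℕ+)
    (h : ∀ c : ℕ+ → ℕ, IsPartition c → schurWord x c = schurWord y c) :
    ∀ c : ℕ+ → ℕ, IsPartition c →
      schurWord (x.map (· + 1)) c = schurWord (y.map (· + 1)) c := by
  intro c hc
  set d : ℕ+ → ℕ := fun i => c (i + 1) with hd_def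
  have hd : IsPartition d := by
    obtain ⟨hmono, N, hN⟩ := hc
    exact ⟨fun i => hmono (i + 1), N, fun i hi =>
      hN (i + 1) (le_trans hi (le_of_lt (PNat.lt_add_right i 1)))⟩
  have hdm : d 1 ≤ c 1 := hc.1 1
  calc schurWord (x.map (· + 1)) c
      = schurWord (x.map (· + 1)) (up (c 1) d) := by rw [up_down]
    _ = (schurWord x d).bind (fun e => if e 1 ≤ c 1 then some (up (c 1) e) else none) :=
        main_lemma x (c 1) d hd hdm
    _ = (schurWord y d).bind (fun e => if e 1 ≤ c 1 then some (up (c 1) e) else none) := by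
        rw [h d hd]
    _ = schurWord (y.map (· + 1)) (up (c 1) d) := (main_lemma y (c 1) d hd hdm).symm
    _ = schurWord (y.map (· + 1)) c := by rw [up_down]
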